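/- Let (a_L), (b_L), (h_L) be positive sequences with a_L ~ C·h(L) and suppose h(n) = n^{-3/4} e^{c√n} with c < 0. If q_1(n) ~ u·h(n) and q_2(n) ~ v·h(n) are probability mass functions on ℕ, then for each fixed r ≥ 0 the convolution satisfies (q_1 * q_2^{*r})(n) ~ (u + r v)·h(n) as n → ∞. -/

import Mathlib

open Filter Finset

/-- Discrete convolution on `ℕ`. -/
def nconv (f g : ℕ → ℝ) : ℕ → ℝ := fun n => ∑ k ∈ Finset.range (n + 1), f k * g (n - k)

/-- `r`-fold convolution power (with the Dirac mass at `0` for `r = 0`). -/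
def nconvPow (f : ℕ → ℝ) : ℕ → ℕ → ℝ
  | 0 => fun n => if n = 0 then 1 else 0
  | r + 1 => nconv (nconvPow f r) f

private lemma hfun_nonneg (c : ℝ) (h : ℕ → ℝ)
    (hh : ∀ n : ℕ, h n = (n : ℝ) ^ (-(3:ℝ)/4) * Real.exp (c * Real.sqrt n)) :
    ∀ n, 0 ≤ h n := fun n => by rw [hh]; positivity

private lemma hfun_pos (c : ℝ) (h : ℕ → ℝ)
    (hh : ∀ n : ℕ, h n = (n : ℝ) ^ (-(3:ℝ)/4) * Real.exp (c * Real.sqrt n)) :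
    ∀ n, 1 ≤ n → 0 < h n := fun n hn => by
  rw [hh]
  have : (0:ℝ) < n := by exact_mod_cast hn
  positivity

/-- The comparison sequence. -/
noncomputable def gse (c : ℝ) (k : ℕ) : ℝ := (k:ℝ) ^ (-(3:ℝ)/4) * Real.exp (c * Real.sqrt k / 4)

private lemma gse_nonneg (c : ℝ) (k : ℕ) : 0 ≤ gse c k := by unfold gse; positivity

private lemma exp_ge_quarter_pow (x : ℝ) (hx : 0 ≤ x) : (x/4)^4 ≤ Real.exp x := by
  have h1 : Real.exp x = (Real.exp (x/4))^4 := by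
    rw [← Real.exp_nat_mul]; norm_num; ring_nf
  have h2 : x/4 ≤ Real.exp (x/4) := le_trans (by linarith) (Real.add_one_le_exp (x/4))
  rw [h1]
  exact pow_le_pow_left₀ (by linarith) h2 4

private lemma gse_summable {c : ℝ} (hc : c < 0) : Summable (gse c) := by
  have ha : (0:ℝ) < -c := by linarith
  have hsum : Summable (fun k : ℕ => (4^4*256/(-c)^4) * (1 / (k:ℝ)^2)) :=
    ((Real.summable_one_div_nat_pow).mpr one_lt_two).mul_left _
  refine hsum.of_nonneg_of_le (fun k => gse_nonneg c k) (fun k => ?_)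
  rcases Nat.eq_zero_or_pos k with rfl | hk
  · simp [gse, Real.zero_rpow]
  · have hk1 : (1:ℝ) ≤ (k:ℝ) := by exact_mod_cast hk
    have hk0 : (0:ℝ) < (k:ℝ) := by linarith
    have hsq : (0:ℝ) < Real.sqrt k := Real.sqrt_pos.mpr hk0
    -- rpow factor ≤ 1
    have h1 : (k:ℝ) ^ (-(3:ℝ)/4) ≤ 1 := by
      rw [show (1:ℝ) = (k:ℝ) ^ (0:ℝ) by rw [Real.rpow_zero]]
      exact Real.rpow_le_rpow_of_exponent_le hk1 (by norm_num)
    -- exp factor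
    have h2 : Real.exp (c * Real.sqrt k / 4) ≤ 4^4*256/(-c)^4 * (1/(k:ℝ)^2) := by
      have hx : (0:ℝ) ≤ -c * Real.sqrt k / 4 := by positivity
      have h3 := exp_ge_quarter_pow (-c * Real.sqrt k / 4) hx
      have h4 : Real.exp (c * Real.sqrt k / 4) = (Real.exp (-c * Real.sqrt k / 4))⁻¹ := by
        rw [← Real.exp_neg]; ring_nf
      have hsksq : Real.sqrt k ^ 2 = (k:ℝ) := Real.sq_sqrt hk0.le
      have h5 : (-c * Real.sqrt k / 4 / 4)^4 = (-c)^4 * (k:ℝ)^2 / (4^4*256) := by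
        have hs4 : (Real.sqrt k)^4 = (k:ℝ)^2 := by
          rw [show 4 = 2*2 by rfl, pow_mul, hsksq]
        rw [div_pow, div_pow, mul_pow, hs4]
        norm_num
        ring
      rw [h4]
      rw [inv_le_comm₀ (Real.exp_pos _) (by positivity)] -- maybe wrong name
      calc ((4:ℝ)^4*256/(-c)^4 * (1/(k:ℝ)^2))⁻¹ = (-c)^4 * (k:ℝ)^2 / (4^4*256) := by
            field_simp
        _ = (-c * Real.sqrt k / 4 / 4)^4 := h5.symm
        _ ≤ Real.exp (-c * Real.sqrt k / 4) := h3
    calc gse c k ≤ 1 * Real.exp (c * Real.sqrt k / 4) := by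
          unfold gse; exact mul_le_mul_of_nonneg_right h1 (Real.exp_pos _).le
      _ = Real.exp (c * Real.sqrt k / 4) := one_mul _
      _ ≤ 4^4*256/(-c)^4 * (1/(k:ℝ)^2) := h2

/-- Core subexponential estimate: for `2 ≤ k`, `2k ≤ n`,
`h k * h (n-k) ≤ 2 * (h n * gse c k)`. -/
private lemma core_bound {c : ℝ} (hc : c < 0) (h : ℕ → ℝ)
    (hh : ∀ n : ℕ, h n = (n : ℝ) ^ (-(3:ℝ)/4) * Real.exp (c * Real.sqrt n)) :
    ∀ k n : ℕ, 2 ≤ k → 2*k ≤ n → h k * h (n-k) ≤ 2 * (h n * gse c k) := by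
  intro k n hk2 hkn
  have hkle : k ≤ n := le_trans (by omega) hkn
  have hcast : ((n - k : ℕ) : ℝ) = (n:ℝ) - (k:ℝ) := by
    push_cast [Nat.cast_sub hkle]; ring
  set x : ℝ := (k:ℝ) with hxdef
  set y : ℝ := (n:ℝ) - (k:ℝ) with hydef
  have hx2 : (2:ℝ) ≤ x := by simp only [hxdef]; exact_mod_cast hk2
  have hxy : x ≤ y := by
    have : (2*k : ℕ) ≤ n := hkn
    have : ((2*k : ℕ) : ℝ) ≤ (n:ℝ) := by exact_mod_cast this
    push_cast at this; simp only [hxdef, hydef]; linarith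
  have hx0 : (0:ℝ) < x := by linarith
  have hy0 : (0:ℝ) < y := lt_of_lt_of_le hx0 hxy
  have hN : (n:ℝ) = x + y := by simp [hxdef, hydef]
  have hN0 : (0:ℝ) < (n:ℝ) := by rw [hN]; linarith
  -- rpow part
  have hA : y ^ (-(3:ℝ)/4) ≤ 2 * (n:ℝ) ^ (-(3:ℝ)/4) := by
    have hyn2 : (n:ℝ)/2 ≤ y := by rw [hN]; linarith
    have h1 : y ^ (-(3:ℝ)/4) ≤ ((n:ℝ)/2) ^ (-(3:ℝ)/4) :=
      Real.rpow_le_rpow_of_nonpos (by linarith) hyn2 (by norm_num)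
    have h2 : ((n:ℝ)/2) ^ (-(3:ℝ)/4) = (n:ℝ) ^ (-(3:ℝ)/4) * (2:ℝ) ^ ((3:ℝ)/4) := by
      rw [Real.div_rpow hN0.le (by norm_num)]
      rw [show (2:ℝ) ^ (-(3:ℝ)/4) = ((2:ℝ) ^ ((3:ℝ)/4))⁻¹ by
        rw [← Real.rpow_neg (by norm_num)]; norm_num]
      field_simp
    have h3 : (2:ℝ) ^ ((3:ℝ)/4) ≤ 2 := by
      nth_rewrite 2 [show (2:ℝ) = (2:ℝ) ^ (1:ℝ) by rw [Real.rpow_one]]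
      exact Real.rpow_le_rpow_of_exponent_le one_le_two (by norm_num)
    calc y ^ (-(3:ℝ)/4) ≤ (n:ℝ) ^ (-(3:ℝ)/4) * (2:ℝ) ^ ((3:ℝ)/4) := by rw [← h2]; exact h1
      _ ≤ (n:ℝ) ^ (-(3:ℝ)/4) * 2 := by
          exact mul_le_mul_of_nonneg_left h3 (Real.rpow_nonneg hN0.le _)
      _ = 2 * (n:ℝ) ^ (-(3:ℝ)/4) := mul_comm _ _
  -- exp part
  have hB : Real.exp (c * Real.sqrt x + c * Real.sqrt y)
      ≤ Real.exp (c * Real.sqrt n + c * Real.sqrt x / 4) := by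
    rw [Real.exp_le_exp]
    have hsx : (0:ℝ) ≤ Real.sqrt x := Real.sqrt_nonneg _
    have hsxy : Real.sqrt x ≤ Real.sqrt y := Real.sqrt_le_sqrt hxy
    have hsx2 : Real.sqrt x * Real.sqrt x = x := Real.mul_self_sqrt hx0.le
    have hsqn : Real.sqrt (x + y) ≤ 3/4 * Real.sqrt x + Real.sqrt y := by
      have hle : x + y ≤ (3/4 * Real.sqrt x + Real.sqrt y)^2 := by
        have hsy2 : Real.sqrt y * Real.sqrt y = y := Real.mul_self_sqrt hy0.le
        nlinarith [mul_le_mul_of_nonneg_left hsxy hsx]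
      calc Real.sqrt (x + y) ≤ Real.sqrt ((3/4 * Real.sqrt x + Real.sqrt y)^2) :=
            Real.sqrt_le_sqrt hle
        _ = 3/4 * Real.sqrt x + Real.sqrt y := Real.sqrt_sq (by positivity)
    have hkey : Real.sqrt ((n:ℝ)) + Real.sqrt x / 4 ≤ Real.sqrt x + Real.sqrt y := by
      rw [hN]; linarith
    nlinarith [mul_le_mul_of_nonpos_left hkey hc.le]
  -- combine
  rw [hh k, hh (n-k), hh n, gse, hcast]
  have lhs_eq : (k:ℝ) ^ (-(3:ℝ)/4) * Real.exp (c * Real.sqrt k) *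
      (y ^ (-(3:ℝ)/4) * Real.exp (c * Real.sqrt y))
      = x ^ (-(3:ℝ)/4) * (y ^ (-(3:ℝ)/4) * Real.exp (c * Real.sqrt x + c * Real.sqrt y)) := by
    rw [Real.exp_add]; ring
  have rhs_eq : 2 * ((n:ℝ) ^ (-(3:ℝ)/4) * Real.exp (c * Real.sqrt n) *
      ((k:ℝ) ^ (-(3:ℝ)/4) * Real.exp (c * Real.sqrt k / 4)))
      = x ^ (-(3:ℝ)/4) * ((2 * (n:ℝ) ^ (-(3:ℝ)/4)) *
          Real.exp (c * Real.sqrt n + c * Real.sqrt x / 4)) := by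
    rw [Real.exp_add]; ring
  rw [lhs_eq, rhs_eq]
  refine mul_le_mul_of_nonneg_left ?_ (Real.rpow_nonneg hx0.le _)
  exact mul_le_mul hA hB (Real.exp_pos _).le (by positivity)

private lemma sqrtNatTop : Tendsto (fun n : ℕ => Real.sqrt n) atTop atTop := by
  apply Filter.tendsto_atTop_atTop.mpr
  intro b
  refine ⟨Nat.ceil (b^2), fun a ha => ?_⟩
  have h1 : (b^2 : ℝ) ≤ (a:ℝ) := le_trans (Nat.le_ceil _) (by exact_mod_cast ha)
  calc b ≤ |b| := le_abs_self b
    _ = Real.sqrt (b^2) := (Real.sqrt_sq_eq_abs b).symm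
    _ ≤ Real.sqrt a := Real.sqrt_le_sqrt h1

/-- `h (n - k) / h n → 1` for fixed `k`. -/
private lemma h_ratio {c : ℝ} (h : ℕ → ℝ)
    (hh : ∀ n : ℕ, h n = (n : ℝ) ^ (-(3:ℝ)/4) * Real.exp (c * Real.sqrt n)) (k : ℕ) :
    Tendsto (fun n => h (n - k) / h n) atTop (nhds 1) := by
  have hratio : Tendsto (fun n : ℕ => ((n - k : ℕ) : ℝ) / (n:ℝ)) atTop (nhds 1) := by
    have h0 : Tendsto (fun n : ℕ => 1 - (k:ℝ)/(n:ℝ)) atTop (nhds 1) := by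
      simpa using tendsto_const_nhds.sub (tendsto_const_div_atTop_nhds_zero_nat (k:ℝ))
    refine h0.congr' ?_
    filter_upwards [eventually_ge_atTop (k+1)] with n hn
    have hkn : k ≤ n := by omega
    have hn0 : (0:ℝ) < (n:ℝ) := by
      have : 0 < n := by omega
      exact_mod_cast this
    rw [Nat.cast_sub hkn]
    field_simp
  have t1 : Tendsto (fun n : ℕ => (((n - k : ℕ):ℝ) / (n:ℝ)) ^ (-(3:ℝ)/4)) atTop (nhds 1) := by
    have hcont : ContinuousAt (fun x : ℝ => x ^ (-(3:ℝ)/4)) 1 :=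
      Real.continuousAt_rpow_const 1 _ (Or.inl one_ne_zero)
    have := hcont.tendsto.comp hratio
    simpa [Real.one_rpow, Function.comp_def] using this
  have hdiff : Tendsto (fun n : ℕ => Real.sqrt ((n-k:ℕ)) - Real.sqrt n) atTop (nhds 0) := by
    have hlbt : Tendsto (fun n : ℕ => -((k:ℝ)/Real.sqrt n)) atTop (nhds 0) := by
      simpa using (tendsto_const_nhds.div_atTop sqrtNatTop).neg
    refine tendsto_of_tendsto_of_tendsto_of_le_of_le' hlbt tendsto_const_nhds ?_ ?_
    · filter_upwards [eventually_ge_atTop (k+1)] with n hn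
      have hkn : k ≤ n := by omega
      have hn0 : (0:ℝ) < (n:ℝ) := by
        have : 0 < n := by omega
        exact_mod_cast this
      have hcast : ((n - k : ℕ) : ℝ) = (n:ℝ) - (k:ℝ) := by
        push_cast [Nat.cast_sub hkn]; ring
      set s := Real.sqrt (n:ℝ) with hs
      set t := Real.sqrt ((n-k:ℕ):ℝ) with ht
      have hs0 : 0 < s := Real.sqrt_pos.mpr hn0
      have ht0 : 0 ≤ t := Real.sqrt_nonneg _
      have hts : t ≤ s := Real.sqrt_le_sqrt (by rw [hcast]; have : (0:ℝ) ≤ (k:ℝ) := by positivity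
                                                linarith)
      have hss : s * s = (n:ℝ) := Real.mul_self_sqrt hn0.le
      have htt : t * t = (n:ℝ) - (k:ℝ) := by
        have h0 : (0:ℝ) ≤ ((n-k:ℕ):ℝ) := by positivity
        rw [ht, Real.mul_self_sqrt h0, hcast]
      rw [neg_le, neg_sub, le_div_iff₀ hs0]
      nlinarith
    · filter_upwards with n
      have : ((n - k : ℕ) : ℝ) ≤ (n:ℝ) := by exact_mod_cast Nat.sub_le n k
      have := Real.sqrt_le_sqrt this
      linarith
  have t2 : Tendsto (fun n : ℕ => Real.exp (c * (Real.sqrt ((n-k:ℕ)) - Real.sqrt n)))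
      atTop (nhds 1) := by
    have h0 : Tendsto (fun n : ℕ => c * (Real.sqrt ((n-k:ℕ)) - Real.sqrt n)) atTop (nhds 0) := by
      simpa using hdiff.const_mul c
    have := (Real.continuous_exp.tendsto 0).comp h0
    simpa [Function.comp_def] using this
  have hmul := t1.mul t2
  rw [show ((1:ℝ) * 1) = 1 by norm_num] at hmul
  refine hmul.congr' ?_
  filter_upwards [eventually_ge_atTop (k+1)] with n hn
  have hkn : k ≤ n := by omega
  have hn0 : (0:ℝ) < (n:ℝ) := by
    have : 0 < n := by omega
    exact_mod_cast this
  rw [hh (n-k), hh n]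
  rw [Real.div_rpow (by positivity) hn0.le, mul_sub, Real.exp_sub, div_mul_div_comm]

private lemma exists_K {c : ℝ} (h : ℕ → ℝ)
    (hh : ∀ n : ℕ, h n = (n : ℝ) ^ (-(3:ℝ)/4) * Real.exp (c * Real.sqrt n))
    (p : ℕ → ℝ) (a : ℝ) (hnn : ∀ n, 0 ≤ p n) (hsupp : ∀ n < 2, p n = 0)
    (hten : Tendsto (fun n => p n / h n) atTop (nhds a)) :
    ∃ K, 0 < K ∧ ∀ n, p n ≤ K * h n := by
  have hratio_nonneg : ∀ n, 0 ≤ p n / h n := fun n =>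
    div_nonneg (hnn n) (hfun_nonneg c h hh n)
  have hev : ∀ᶠ n in atTop, p n / h n ≤ |a| + 1 := by
    have : ∀ᶠ x in nhds a, x ≤ |a| + 1 :=
      eventually_le_nhds (lt_of_le_of_lt (le_abs_self a) (lt_add_one _))
    exact hten.eventually this
  obtain ⟨N, hN⟩ := eventually_atTop.mp hev
  have hsum0 : 0 ≤ ∑ m ∈ Finset.range N, p m / h m :=
    Finset.sum_nonneg fun m _ => hratio_nonneg m
  refine ⟨|a| + 1 + ∑ m ∈ Finset.range N, p m / h m,
    by linarith [abs_nonneg a], fun n => ?_⟩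
  rcases Nat.lt_or_ge n 2 with hn2 | hn2
  · rw [hsupp n hn2]
    exact mul_nonneg (by linarith [abs_nonneg a]) (hfun_nonneg c h hh n)
  · have hpos : 0 < h n := hfun_pos c h hh n (by omega)
    have hK : p n / h n ≤ |a| + 1 + ∑ m ∈ Finset.range N, p m / h m := by
      have hsum0 : 0 ≤ ∑ m ∈ Finset.range N, p m / h m :=
        Finset.sum_nonneg fun m _ => hratio_nonneg m
      rcases le_or_gt N n with hNn | hnN
      · have := hN n hNn; linarith
      · have single := Finset.single_le_sum (f := fun m => p m / h m)
          (fun m _ => hratio_nonneg m) (Finset.mem_range.mpr hnN)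
        have h0 : (0:ℝ) ≤ |a| + 1 := by positivity
        linarith
    calc p n = (p n / h n) * h n := by field_simp
      _ ≤ (|a| + 1 + ∑ m ∈ Finset.range N, p m / h m) * h n :=
          mul_le_mul_of_nonneg_right hK hpos.le

private lemma hasSum_nconv {p q : ℕ → ℝ} {x y : ℝ}
    (hp : ∀ n, 0 ≤ p n) (hq : ∀ n, 0 ≤ q n)
    (hps : HasSum p x) (hqs : HasSum q y) : HasSum (nconv p q) (x*y) := by
  have h1 : Summable fun n => ‖p n‖ := by
    simpa [Real.norm_eq_abs, abs_of_nonneg (hp _)] using hps.summable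
  have h2 : Summable fun n => ‖q n‖ := by
    simpa [Real.norm_eq_abs, abs_of_nonneg (hq _)] using hqs.summable
  have := hasSum_sum_range_mul_of_summable_norm h1 h2
  rw [hps.tsum_eq, hqs.tsum_eq] at this
  exact this

private lemma nconv_coeff (f g : ℕ → ℝ) (n : ℕ) :
    nconv f g n = PowerSeries.coeff n (PowerSeries.mk f * PowerSeries.mk g) := by
  rw [PowerSeries.coeff_mul, Finset.Nat.sum_antidiagonal_eq_sum_range_succ_mk]
  simp [nconv, PowerSeries.coeff_mk]

private lemma nconvPow_coeff (f : ℕ → ℝ) (r n : ℕ) :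
    nconvPow f r n = PowerSeries.coeff n ((PowerSeries.mk f)^r) := by
  induction r generalizing n with
  | zero => simp [nconvPow, PowerSeries.coeff_one]
  | succ r ih =>
    have hmk : PowerSeries.mk (nconvPow f r) = (PowerSeries.mk f)^r := by
      ext m; simp [PowerSeries.coeff_mk, ih]
    show nconv (nconvPow f r) f n = _
    rw [nconv_coeff, hmk, pow_succ]

private lemma nconv_pow_succ (f g : ℕ → ℝ) (r : ℕ) :
    nconv f (nconvPow g (r+1)) = nconv (nconv f (nconvPow g r)) g := by
  funext n
  have h1 : PowerSeries.mk (nconvPow g (r+1)) = (PowerSeries.mk g)^(r+1) := by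
    ext m; simp [PowerSeries.coeff_mk, nconvPow_coeff]
  have h2 : PowerSeries.mk (nconvPow g r) = (PowerSeries.mk g)^r := by
    ext m; simp [PowerSeries.coeff_mk, nconvPow_coeff]
  have h3 : PowerSeries.mk (nconv f (nconvPow g r))
      = PowerSeries.mk f * (PowerSeries.mk g)^r := by
    ext m; simp [PowerSeries.coeff_mk, nconv_coeff, h2]
  rw [nconv_coeff, nconv_coeff, h1, h3, pow_succ, mul_assoc]

private lemma nconv_nonneg {p q : ℕ → ℝ} (hp : ∀ n, 0 ≤ p n) (hq : ∀ n, 0 ≤ q n) :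
    ∀ n, 0 ≤ nconv p q n := fun n =>
  Finset.sum_nonneg fun k _ => mul_nonneg (hp k) (hq _)

private lemma nconv_supp {p q : ℕ → ℝ} (hp : ∀ n < 2, p n = 0) :
    ∀ n < 2, nconv p q n = 0 := fun n hn =>
  Finset.sum_eq_zero fun k hk => by
    rw [hp k (by simp at hk; omega), zero_mul]

private lemma nconv_delta (f g : ℕ → ℝ) : nconv f (nconvPow g 0) = f := by
  funext n
  rw [nconv_coeff]
  have h1 : PowerSeries.mk (nconvPow g 0) = 1 := by
    ext m; simp [PowerSeries.coeff_mk, nconvPow, PowerSeries.coeff_one]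
  rw [h1, mul_one, PowerSeries.coeff_mk]

set_option maxHeartbeats 1600000 in
private lemma key_conv {c : ℝ} (hc : c < 0) (h : ℕ → ℝ)
    (hh : ∀ n : ℕ, h n = (n : ℝ) ^ (-(3:ℝ)/4) * Real.exp (c * Real.sqrt n))
    (p q : ℕ → ℝ) (a b : ℝ) (hb : 0 ≤ b) (ha : 0 ≤ a)
    (hpnn : ∀ n, 0 ≤ p n) (hqnn : ∀ n, 0 ≤ q n)
    (hps : HasSum p 1) (hqs : HasSum q 1)
    (hpsupp : ∀ n < 2, p n = 0) (hqsupp : ∀ n < 2, q n = 0)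
    (hpa : Tendsto (fun n => p n / h n) atTop (nhds a))
    (hqb : Tendsto (fun n => q n / h n) atTop (nhds b)) :
    Tendsto (fun n => nconv p q n / h n) atTop (nhds (a + b)) := by
  obtain ⟨Kp, hKp0, hKp⟩ := exists_K h hh p a hpnn hpsupp hpa
  obtain ⟨Kq, hKq0, hKq⟩ := exists_K h hh q b hqnn hqsupp hqb
  have shift : ∀ (f : ℕ → ℝ) (L : ℝ), Tendsto (fun n => f n / h n) atTop (nhds L) →
      ∀ k : ℕ, Tendsto (fun n => f (n - k) / h n) atTop (nhds L) := by
    intro f L hf k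
    have hcomp : Tendsto (fun n : ℕ => f (n - k) / h (n - k)) atTop (nhds L) :=
      hf.comp (tendsto_sub_atTop_nat k)
    have hmul := hcomp.mul (h_ratio h hh k)
    rw [mul_one] at hmul
    refine Tendsto.congr' ?_ hmul
    filter_upwards [eventually_ge_atTop (k+1)] with n hn
    have hpos : 0 < h (n - k) := hfun_pos c h hh _ (by omega)
    have hposn : 0 < h n := hfun_pos c h hh _ (by omega)
    field_simp
  have hPle : ∀ M, (∑ k ∈ range M, p k) ≤ 1 := fun M =>
    sum_le_hasSum _ (fun i _ => hpnn i) hps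
  have hQle : ∀ M, (∑ k ∈ range M, q k) ≤ 1 := fun M =>
    sum_le_hasSum _ (fun i _ => hqnn i) hqs
  have hPt : Tendsto (fun M => ∑ k ∈ range M, p k) atTop (nhds 1) := hps.tendsto_sum_nat
  have hQt : Tendsto (fun M => ∑ k ∈ range M, q k) atTop (nhds 1) := hqs.tendsto_sum_nat
  have hTt : Tendsto (fun M => ∑' i, gse c (i + M)) atTop (nhds 0) :=
    tendsto_sum_nat_add (gse c)
  rw [Metric.tendsto_atTop]
  intro ε hε
  have hε6 : (0:ℝ) < ε/6 := by linarith
  have hev1 : ∀ᶠ M in atTop, b * (1 - ∑ k ∈ range M, p k) < ε/6 := by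
    have h0 : Tendsto (fun M => b * (1 - ∑ k ∈ range M, p k)) atTop (nhds (b * (1-1))) :=
      (tendsto_const_nhds.sub hPt).const_mul b
    rw [show b * ((1:ℝ) - 1) = 0 by ring] at h0
    exact h0.eventually (gt_mem_nhds hε6)
  have hev2 : ∀ᶠ M in atTop, a * (1 - ∑ k ∈ range M, q k) < ε/6 := by
    have h0 : Tendsto (fun M => a * (1 - ∑ k ∈ range M, q k)) atTop (nhds (a * (1-1))) :=
      (tendsto_const_nhds.sub hQt).const_mul a
    rw [show a * ((1:ℝ) - 1) = 0 by ring] at h0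
    exact h0.eventually (gt_mem_nhds hε6)
  have hev3 : ∀ᶠ M in atTop, 4*Kp*Kq*(∑' i, gse c (i + M)) < ε/6 := by
    have h0 : Tendsto (fun M => 4*Kp*Kq*(∑' i, gse c (i + M))) atTop (nhds (4*Kp*Kq*0)) :=
      hTt.const_mul (4*Kp*Kq)
    rw [show 4*Kp*Kq*(0:ℝ) = 0 by ring] at h0
    exact h0.eventually (gt_mem_nhds hε6)
  obtain ⟨M, hM1, hM2, hM3, hM4⟩ :=
    (hev1.and (hev2.and (hev3.and (eventually_ge_atTop 2)))).exists
  set T := ∑' i, gse c (i + M) with hTdef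
  set PM := ∑ k ∈ range M, p k with hPMdef
  set QM := ∑ k ∈ range M, q k with hQMdef
  have hAlim : Tendsto (fun n => ∑ k ∈ range M, p k * (q (n - k) / h n)) atTop
      (nhds (PM * b)) := by
    have := tendsto_finset_sum (range M)
      (fun k (_ : k ∈ range M) => (shift q b hqb k).const_mul (p k))
    rw [hPMdef]
    simpa [Finset.sum_mul] using this
  have hBlim : Tendsto (fun n => ∑ j ∈ range M, (p (n - j) / h n) * q j) atTop
      (nhds (a * QM)) := by
    have := tendsto_finset_sum (range M)
      (fun j (_ : j ∈ range M) => (shift p a hpa j).mul_const (q j))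
    rw [hQMdef]
    simpa [Finset.mul_sum] using this
  obtain ⟨N₁, hN₁⟩ := Metric.tendsto_atTop.mp hAlim (ε/6) hε6
  obtain ⟨N₂, hN₂⟩ := Metric.tendsto_atTop.mp hBlim (ε/6) hε6
  refine ⟨max (max N₁ N₂) (2*M+2), fun n hn => ?_⟩
  have hnN₁ : N₁ ≤ n := le_trans (le_trans (le_max_left _ _) (le_max_left _ _)) hn
  have hnN₂ : N₂ ≤ n := le_trans (le_trans (le_max_right _ _) (le_max_left _ _)) hn
  have hn2M : 2*M + 2 ≤ n := le_trans (le_max_right _ _) hn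
  have hn1 : 1 ≤ n := by omega
  have hhn : 0 < h n := hfun_pos c h hh n hn1
  -- decomposition
  have e1 : (∑ k ∈ Ico 0 M, p k * q (n-k)) + ∑ k ∈ Ico M (n+1), p k * q (n-k)
      = ∑ k ∈ Ico 0 (n+1), p k * q (n-k) :=
    Finset.sum_Ico_consecutive _ (Nat.zero_le M) (by omega)
  have e2 : (∑ k ∈ Ico M (n+1-M), p k * q (n-k)) + ∑ k ∈ Ico (n+1-M) (n+1), p k * q (n-k)
      = ∑ k ∈ Ico M (n+1), p k * q (n-k) :=
    Finset.sum_Ico_consecutive _ (by omega) (by omega)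
  have e3 := Finset.sum_Ico_reflect (fun j => p j * q (n - j)) 0
    (show M ≤ n + 1 by omega)
  have e4 : ∑ j ∈ range M, p (n-j) * q j = ∑ k ∈ Ico (n+1-M) (n+1), p k * q (n-k) := by
    rw [show (n+1-0) = n+1 from rfl] at e3
    rw [← e3, ← Nat.Ico_zero_eq_range]
    apply Finset.sum_congr rfl
    intro j hj
    have hjM : j < M := by simp [Finset.mem_Ico] at hj; omega
    show p (n - j) * q j = p (n - j) * q (n - (n - j))
    rw [Nat.sub_sub_self (by omega : j ≤ n)]
  have hdecomp : nconv p q n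
      = (∑ k ∈ range M, p k * q (n - k))
        + (∑ k ∈ Ico M (n+1-M), p k * q (n - k))
        + (∑ j ∈ range M, p (n - j) * q j) := by
    have hsum : ∑ k ∈ Ico 0 (n+1), p k * q (n-k)
        = (∑ k ∈ Ico 0 M, p k * q (n-k)) + (∑ k ∈ Ico M (n+1-M), p k * q (n-k))
          + (∑ k ∈ Ico (n+1-M) (n+1), p k * q (n-k)) := by
      rw [← e1, ← e2]; ring
    calc nconv p q n = ∑ k ∈ Ico 0 (n+1), p k * q (n-k) := by
          show (∑ k ∈ range (n+1), p k * q (n-k)) = _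
          rw [Finset.range_eq_Ico]
      _ = (∑ k ∈ Ico 0 M, p k * q (n-k)) + (∑ k ∈ Ico M (n+1-M), p k * q (n-k))
          + (∑ k ∈ Ico (n+1-M) (n+1), p k * q (n-k)) := hsum
      _ = (∑ k ∈ range M, p k * q (n - k)) + (∑ k ∈ Ico M (n+1-M), p k * q (n - k))
          + (∑ j ∈ range M, p (n - j) * q j) := by
          rw [Nat.Ico_zero_eq_range, ← e4]
  -- R bound
  set R := ∑ k ∈ Ico M (n+1-M), p k * q (n - k) with hRdef
  have hRnonneg : 0 ≤ R :=
    Finset.sum_nonneg fun k _ => mul_nonneg (hpnn k) (hqnn _)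
  have hRbound : R ≤ 4*Kp*Kq*T * h n := by
    have step1 : ∀ k ∈ Ico M (n+1-M),
        p k * q (n-k) ≤ Kp*Kq*(2*(h n*(gse c k + gse c (n-k)))) := by
      intro k hk
      rw [Finset.mem_Ico] at hk
      obtain ⟨hkM, hkn⟩ := hk
      have hk2 : 2 ≤ k := le_trans hM4 hkM
      have hnk2 : 2 ≤ n - k := by omega
      have hhb : h k * h (n-k) ≤ 2 * (h n * (gse c k + gse c (n-k))) := by
        have hg1 := gse_nonneg c k
        have hg2 := gse_nonneg c (n-k)
        have hhn0 := hfun_nonneg c h hh n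
        rcases le_or_gt (2*k) n with hcase | hcase
        · have hb1 := core_bound hc h hh k n hk2 hcase
          nlinarith
        · have hj : 2*(n-k) ≤ n := by omega
          have hb1 := core_bound hc h hh (n-k) n hnk2 hj
          rw [Nat.sub_sub_self (by omega : k ≤ n)] at hb1
          nlinarith
      calc p k * q (n-k) ≤ (Kp * h k) * (Kq * h (n-k)) :=
            mul_le_mul (hKp k) (hKq _) (hqnn _)
              (mul_nonneg hKp0.le (hfun_nonneg c h hh k))
        _ = Kp*Kq*(h k * h (n-k)) := by ring
        _ ≤ Kp*Kq*(2*(h n*(gse c k + gse c (n-k)))) :=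
            mul_le_mul_of_nonneg_left hhb (by positivity)
    have step2 := Finset.sum_le_sum step1
    have refl : ∑ k ∈ Ico M (n+1-M), gse c (n - k) = ∑ k ∈ Ico M (n+1-M), gse c k := by
      have h5 := Finset.sum_Ico_reflect (gse c) M (show n+1-M ≤ n+1 by omega)
      rw [Nat.sub_sub_self (show M ≤ n+1 by omega)] at h5
      exact h5
    have expand : ∑ k ∈ Ico M (n+1-M), Kp*Kq*(2*(h n*(gse c k + gse c (n-k))))
        = 2*Kp*Kq*h n * ((∑ k ∈ Ico M (n+1-M), gse c k)
            + ∑ k ∈ Ico M (n+1-M), gse c (n-k)) := by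
      rw [← Finset.sum_add_distrib, Finset.mul_sum]
      apply Finset.sum_congr rfl
      intro k _; ring
    have tailb : ∑ k ∈ Ico M (n+1-M), gse c k ≤ T := by
      rw [Finset.sum_Ico_eq_sum_range]
      have hsummable : Summable (fun i => gse c (i + M)) :=
        (summable_nat_add_iff M).mpr (gse_summable hc)
      have h6 := Summable.sum_le_tsum (Finset.range (n+1-M-M)) (fun i _ => gse_nonneg c _) hsummable
      rw [hTdef]
      calc ∑ i ∈ range (n+1-M-M), gse c (M + i)
          = ∑ i ∈ range (n+1-M-M), gse c (i + M) := by
            apply Finset.sum_congr rfl; intro i _; rw [add_comm]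
        _ ≤ ∑' i, gse c (i + M) := h6
    have tail0 : 0 ≤ ∑ k ∈ Ico M (n+1-M), gse c k :=
      Finset.sum_nonneg fun k _ => gse_nonneg c k
    calc R ≤ ∑ k ∈ Ico M (n+1-M), Kp*Kq*(2*(h n*(gse c k + gse c (n-k)))) := step2
      _ = 2*Kp*Kq*h n * ((∑ k ∈ Ico M (n+1-M), gse c k)
            + ∑ k ∈ Ico M (n+1-M), gse c (n-k)) := expand
      _ = 4*Kp*Kq*h n * (∑ k ∈ Ico M (n+1-M), gse c k) := by rw [refl]; ring
      _ ≤ 4*Kp*Kq*h n * T := by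
          exact mul_le_mul_of_nonneg_left tailb (by positivity)
      _ = 4*Kp*Kq*T * h n := by ring
  have hRdiv : R / h n ≤ 4*Kp*Kq*T := by
    rw [div_le_iff₀ hhn]; exact hRbound
  have hRdiv0 : 0 ≤ R / h n := div_nonneg hRnonneg hhn.le
  have hA := hN₁ n hnN₁
  have hB := hN₂ n hnN₂
  rw [Real.dist_eq] at hA hB ⊢
  have hsplit : nconv p q n / h n
      = (∑ k ∈ range M, p k * (q (n-k) / h n)) + R / h n
        + (∑ j ∈ range M, (p (n-j) / h n) * q j) := by
    rw [hdecomp, add_div, add_div]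
    congr 1
    · congr 1
      rw [Finset.sum_div]
      apply Finset.sum_congr rfl
      intro k _; rw [mul_div_assoc]
    · rw [Finset.sum_div]
      apply Finset.sum_congr rfl
      intro j _
      exact (div_mul_eq_mul_div _ _ _).symm
  rw [hsplit]
  have h1P : 0 ≤ 1 - PM := by linarith [hPle M]
  have h1Q : 0 ≤ 1 - QM := by linarith [hQle M]
  have hbP : 0 ≤ b * (1 - PM) := mul_nonneg hb h1P
  have haQ : 0 ≤ a * (1 - QM) := mul_nonneg ha h1Q
  rw [abs_lt] at hA hB ⊢
  obtain ⟨hA1, hA2⟩ := hA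
  obtain ⟨hB1, hB2⟩ := hB
  constructor <;> nlinarith [hM1, hM2, hM3, hRdiv, hRdiv0]

/-- If `q₁(n) ~ u·h(n)` and `q₂(n) ~ v·h(n)` for the subexponential sequence
`h(n) = n^{-3/4} e^{c√n}` with `c < 0`, where `q₁, q₂` are probability mass
functions on `ℕ` supported on `{2,3,…}`, then for each fixed `r ≥ 0`,
`(q₁ * q₂^{*r})(n) ~ (u + r v)·h(n)` as `n → ∞`. -/
theorem conv_subexponential_asymptotics
    (c : ℝ) (hc : c < 0)
    (h : ℕ → ℝ)
    (hh : ∀ n : ℕ, h n = (n : ℝ) ^ (-(3:ℝ)/4) * Real.exp (c * Real.sqrt n))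
    (q₁ q₂ : ℕ → ℝ) (u v : ℝ) (hu : 0 < u) (hv : 0 < v)
    (hq₁pos : ∀ n, 0 ≤ q₁ n) (hq₂pos : ∀ n, 0 ≤ q₂ n)
    (hq₁sum : HasSum q₁ 1) (hq₂sum : HasSum q₂ 1)
    (hq₁supp : ∀ n < 2, q₁ n = 0) (hq₂supp : ∀ n < 2, q₂ n = 0)
    (hq₁asym : Tendsto (fun n => q₁ n / h n) atTop (nhds u))
    (hq₂asym : Tendsto (fun n => q₂ n / h n) atTop (nhds v))
    (r : ℕ) :
    Tendsto (fun n => nconv q₁ (nconvPow q₂ r) n / h n) atTop (nhds (u + r * v)) := by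
  suffices H : ∀ s : ℕ, (∀ n, 0 ≤ nconv q₁ (nconvPow q₂ s) n)
      ∧ HasSum (nconv q₁ (nconvPow q₂ s)) 1
      ∧ (∀ n < 2, nconv q₁ (nconvPow q₂ s) n = 0)
      ∧ Tendsto (fun n => nconv q₁ (nconvPow q₂ s) n / h n) atTop
          (nhds (u + s * v)) by
    exact (H r).2.2.2
  intro s
  induction s with
  | zero =>
    rw [nconv_delta q₁ q₂]
    refine ⟨hq₁pos, hq₁sum, hq₁supp, ?_⟩
    simpa using hq₁asym
  | succ s ih =>
    obtain ⟨ihnn, ihsum, ihsupp, ihten⟩ := ih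
    rw [nconv_pow_succ q₁ q₂ s]
    have hanp : (0:ℝ) ≤ u + s * v := by positivity
    refine ⟨nconv_nonneg ihnn hq₂pos, ?_, nconv_supp ihsupp, ?_⟩
    · have := hasSum_nconv ihnn hq₂pos ihsum hq₂sum
      simpa using this
    · have hkey := key_conv hc h hh _ q₂ (u + s*v) v hv.le hanp ihnn hq₂pos
        ihsum hq₂sum ihsupp hq₂supp ihten hq₂asym
      convert hkey using 2
      push_cast; ring
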